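/- Let 0 < a ≤ b < ∞ and Ω ∈ L^∞((0,a) × (0,b)). If f_n ⇀ f weakly in L¹(0,a) and g_n ⇀ g weakly in L¹(0,b), then ∫₀^a ∫₀^b Ω(x,y) f_n(x) g_n(y) dy dx → ∫₀^a ∫₀^b Ω(x,y) f(x) g(y) dy dx as n → ∞. -/

import Mathlib

open MeasureTheory Set Filter



lemma st16_absCont {μ : Measure ℝ} {h : ℝ → ℝ} (hint : Integrable h μ) {ε : ℝ} (hε : 0 < ε) :
    ∃ δ : ℝ, 0 < δ ∧ ∀ s : Set ℝ, MeasurableSet s → μ s ≤ ENNReal.ofReal δ →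
      ∫ y in s, |h y| ∂μ ≤ ε := by
  have hℒ : MemLp h 1 μ := (memLp_one_iff_integrable).2 hint
  obtain ⟨δ, hδ, hspec⟩ := hℒ.eLpNorm_indicator_le le_rfl (by simp) hε
  refine ⟨δ, hδ, fun s hs hμs => ?_⟩
  have h1 : ∫ y in s, |h y| ∂μ = ∫ y, ‖s.indicator h y‖ ∂μ := by
    rw [← integral_indicator hs]
    congr 1
    funext y
    by_cases hy : y ∈ s <;> simp [Set.indicator_apply, hy, abs_nonneg, Real.norm_eq_abs]
  have h2 : ∫ y, ‖s.indicator h y‖ ∂μ = (eLpNorm (s.indicator h) 1 μ).toReal := by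
    rw [integral_norm_eq_lintegral_enorm (hint.aestronglyMeasurable.indicator hs),
      eLpNorm_one_eq_lintegral_enorm]
  have h3 := hspec s hs hμs
  rw [h1, h2]
  calc (eLpNorm (s.indicator h) 1 μ).toReal ≤ (ENNReal.ofReal ε).toReal :=
        ENNReal.toReal_mono ENNReal.ofReal_ne_top h3
    _ = ε := ENNReal.toReal_ofReal hε.le

lemma st16_absContFin {μ : Measure ℝ} {h : ℕ → ℝ → ℝ} (hint : ∀ n, Integrable (h n) μ)
    (N : ℕ) {ε : ℝ} (hε : 0 < ε) :
    ∃ δ : ℝ, 0 < δ ∧ ∀ m < N, ∀ s : Set ℝ, MeasurableSet s → μ s ≤ ENNReal.ofReal δ →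
      ∫ y in s, |h m y| ∂μ ≤ ε := by
  induction N with
  | zero => exact ⟨1, one_pos, fun m hm => absurd hm (Nat.not_lt_zero m)⟩
  | succ N ih =>
    obtain ⟨δ₁, hδ₁, hs₁⟩ := ih
    obtain ⟨δ₂, hδ₂, hs₂⟩ := st16_absCont (hint N) hε
    refine ⟨min δ₁ δ₂, lt_min hδ₁ hδ₂, fun m hm s hs hμs => ?_⟩
    rcases Nat.lt_succ_iff_lt_or_eq.1 hm with hm' | rfl
    · exact hs₁ m hm' s hs (hμs.trans (ENNReal.ofReal_le_ofReal (min_le_left _ _)))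
    · exact hs₂ s hs (hμs.trans (ENNReal.ofReal_le_ofReal (min_le_right _ _)))


lemma st16_absInt {μ : Measure ℝ} (f : ℝ → ℝ) (s : Set ℝ) :
    |∫ y in s, f y ∂μ| ≤ ∫ y in s, |f y| ∂μ := by
  simpa [Real.norm_eq_abs] using norm_integral_le_integral_norm (μ := μ.restrict s) f

lemma st16_signed {μ : Measure ℝ} {h : ℝ → ℝ} (hsm : StronglyMeasurable h)
    (hint : Integrable h μ) {E : Set ℝ} (hE : MeasurableSet E) {ε : ℝ}
    (hlt : ε < ∫ y in E, |h y| ∂μ) :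
    ∃ E' : Set ℝ, MeasurableSet E' ∧ E' ⊆ E ∧ ε / 2 < |∫ y in E', h y ∂μ| := by
  have hP : MeasurableSet {y : ℝ | 0 ≤ h y} := measurableSet_le measurable_const hsm.measurable
  set Ep := E ∩ {y : ℝ | 0 ≤ h y} with hEp
  set Em := E \ {y : ℝ | 0 ≤ h y} with hEm
  have hEpm : MeasurableSet Ep := hE.inter hP
  have hEmm : MeasurableSet Em := hE.diff hP
  have hsplit : ∫ y in E, |h y| ∂μ = ∫ y in Em, |h y| ∂μ + ∫ y in Ep, |h y| ∂μ := by
    rw [← setIntegral_union disjoint_sdiff_inter hEpm hint.abs.integrableOn hint.abs.integrableOn,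
      Set.diff_union_inter]
  have hplus : ∫ y in Ep, h y ∂μ = ∫ y in Ep, |h y| ∂μ :=
    setIntegral_congr_fun hEpm fun y hy => (abs_of_nonneg hy.2).symm
  have hminus : ∫ y in Em, h y ∂μ = -∫ y in Em, |h y| ∂μ := by
    rw [← integral_neg]
    exact setIntegral_congr_fun hEmm fun y hy => by
      have : h y < 0 := lt_of_not_ge hy.2
      rw [abs_of_neg this, neg_neg]
  have hp0 : 0 ≤ ∫ y in Ep, |h y| ∂μ := integral_nonneg fun y => abs_nonneg _
  have hm0 : 0 ≤ ∫ y in Em, |h y| ∂μ := integral_nonneg fun y => abs_nonneg _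
  by_cases hc : ε / 2 < ∫ y in Ep, |h y| ∂μ
  · exact ⟨Ep, hEpm, Set.inter_subset_left, by rw [hplus, abs_of_nonneg hp0]; exact hc⟩
  · refine ⟨Em, hEmm, Set.diff_subset, ?_⟩
    rw [hminus, abs_neg, abs_of_nonneg hm0]
    push_neg at hc
    linarith

lemma st16_ui {μ : Measure ℝ} [IsFiniteMeasure μ] {h : ℕ → ℝ → ℝ} {g : ℝ → ℝ}
    (hsm : ∀ n, StronglyMeasurable (h n)) (hint : ∀ n, Integrable (h n) μ)
    (hgint : Integrable g μ)
    (hconv : ∀ A : Set ℝ, MeasurableSet A →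
      Tendsto (fun n => ∫ y in A, h n y ∂μ) atTop (nhds (∫ y in A, g y ∂μ))) :
    ∀ ε : ℝ, 0 < ε → ∃ δ : ℝ, 0 < δ ∧ ∀ n, ∀ E : Set ℝ, MeasurableSet E →
      μ E ≤ ENNReal.ofReal δ → ∫ y in E, |h n y| ∂μ ≤ ε := by
  classical
  by_contra hcon
  push_neg at hcon
  obtain ⟨ε, hε, hbad0⟩ := hcon
  set ε₁ := ε / 2 with hε₁def
  have hε₁ : 0 < ε₁ := by positivity
  -- every tail contains a bad index
  have bad2 : ∀ N : ℕ, ∀ δ : ℝ, 0 < δ → ∃ n, N ≤ n ∧ ∃ E : Set ℝ,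
      MeasurableSet E ∧ μ E ≤ ENNReal.ofReal δ ∧ ε₁ < |∫ y in E, h n y ∂μ| := by
    intro N δ hδ
    obtain ⟨δ', hδ', hfin⟩ := st16_absContFin hint N hε
    obtain ⟨n, E, hEm, hμE, hIE⟩ := hbad0 (min δ δ') (lt_min hδ hδ')
    have hn : N ≤ n := by
      by_contra hn
      push_neg at hn
      exact absurd (hfin n hn E hEm (hμE.trans (ENNReal.ofReal_le_ofReal (min_le_right _ _))))
        (not_le.2 hIE)
    obtain ⟨E', hE'm, hE'sub, hE'⟩ := st16_signed (hsm n) (hint n) hEm hIE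
    exact ⟨n, hn, E', hE'm,
      (measure_mono hE'sub).trans (hμE.trans (ENNReal.ofReal_le_ofReal (min_le_left _ _))), hE'⟩
  -- one step of the first recursion
  have step1 : ∀ p : ℕ × Set ℝ × ℝ, 0 < p.2.2 → ∃ q : ℕ × Set ℝ × ℝ,
      0 < q.2.2 ∧ q.2.2 ≤ p.2.2 / 2 ∧
      (∀ S : Set ℝ, MeasurableSet S → μ S ≤ ENNReal.ofReal (2 * q.2.2) →
        ∫ y in S, |h p.1 y| ∂μ ≤ ε₁ / 32 ∧ ∫ y in S, |g y| ∂μ ≤ ε₁ / 32) ∧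
      p.1 < q.1 ∧ MeasurableSet q.2.1 ∧ μ q.2.1 ≤ ENNReal.ofReal q.2.2 ∧
      ε₁ < |∫ y in q.2.1, h q.1 y ∂μ| := by
    intro p hp
    have h32 : (0:ℝ) < ε₁ / 32 := by positivity
    obtain ⟨δa, hδa, hsa⟩ := st16_absCont (hint p.1) h32
    obtain ⟨δb, hδb, hsb⟩ := st16_absCont hgint h32
    set δ := min (p.2.2 / 2) (min (δa / 2) (δb / 2)) with hδdef
    have hδpos : 0 < δ := by
      apply lt_min (by positivity) (lt_min (by positivity) (by positivity))
    obtain ⟨n, hn, E, hEm, hμE, hIE⟩ := bad2 (p.1 + 1) δ hδpos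
    refine ⟨(n, E, δ), hδpos, min_le_left _ _, fun S hS hμS => ?_, Nat.lt_of_succ_le hn, hEm,
      hμE, hIE⟩
    constructor
    · refine hsa S hS (hμS.trans (ENNReal.ofReal_le_ofReal ?_))
      have : δ ≤ δa / 2 := le_trans (min_le_right _ _) (min_le_left _ _)
      linarith
    · refine hsb S hS (hμS.trans (ENNReal.ofReal_le_ofReal ?_))
      have : δ ≤ δb / 2 := le_trans (min_le_right _ _) (min_le_right _ _)
      linarith
  -- the recursion
  set step' : ℕ × Set ℝ × ℝ → ℕ × Set ℝ × ℝ :=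
    fun p => if hp : 0 < p.2.2 then Classical.choose (step1 p hp) else p with hstep'def
  set seq : ℕ → ℕ × Set ℝ × ℝ := fun k => step'^[k] (0, (∅ : Set ℝ), 1) with hseqdef
  set nn : ℕ → ℕ := fun k => (seq k).1 with hnndef
  set EE : ℕ → Set ℝ := fun k => (seq k).2.1 with hEEdef
  set dd : ℕ → ℝ := fun k => (seq k).2.2 with hdddef
  have hseq_succ : ∀ k, seq (k + 1) = step' (seq k) := fun k =>
    Function.iterate_succ_apply' step' k _
  have hdpos : ∀ k, 0 < dd k := by
    intro k
    induction k with
    | zero => norm_num [hdddef, hseqdef]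
    | succ k ih =>
      have e : dd (k+1) = (step' (seq k)).2.2 := by
        show (seq (k+1)).2.2 = _
        rw [hseq_succ]
      rw [e]
      show (if hp : 0 < (seq k).2.2 then Classical.choose (step1 (seq k) hp) else seq k).2.2 > 0
      rw [dif_pos ih]
      exact (Classical.choose_spec (step1 (seq k) ih)).1
  have hstep : ∀ k, 0 < dd (k+1) ∧ dd (k+1) ≤ dd k / 2 ∧
      (∀ S : Set ℝ, MeasurableSet S → μ S ≤ ENNReal.ofReal (2 * dd (k+1)) →
        ∫ y in S, |h (nn k) y| ∂μ ≤ ε₁ / 32 ∧ ∫ y in S, |g y| ∂μ ≤ ε₁ / 32) ∧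
      nn k < nn (k+1) ∧ MeasurableSet (EE (k+1)) ∧ μ (EE (k+1)) ≤ ENNReal.ofReal (dd (k+1)) ∧
      ε₁ < |∫ y in EE (k+1), h (nn (k+1)) y ∂μ| := by
    intro k
    have e : seq (k+1) = Classical.choose (step1 (seq k) (hdpos k)) := by
      rw [hseq_succ]
      show (if hp : 0 < (seq k).2.2 then Classical.choose (step1 (seq k) hp) else seq k) = _
      rw [dif_pos (hdpos k)]
    have hs := Classical.choose_spec (step1 (seq k) (hdpos k))
    rw [← e] at hs
    exact hs
  clear hbad0 bad2
  have hnmono : StrictMono nn := strictMono_nat_of_lt_succ fun k => (hstep k).2.2.2.1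
  have hdhalf : ∀ k j, dd (k + j) ≤ dd k * (1/2)^j := by
    intro k j
    induction j with
    | zero => simp
    | succ j ih =>
      have h1 : dd (k + j + 1) ≤ dd (k + j) / 2 := (hstep (k+j)).2.1
      have h2 : dd (k + j) / 2 ≤ dd k * (1/2)^j / 2 := by linarith
      calc dd (k + (j+1)) = dd (k + j + 1) := by ring_nf
        _ ≤ dd k * (1/2)^j / 2 := h1.trans h2
        _ = dd k * (1/2)^(j+1) := by ring
  have hEmeas : ∀ k, MeasurableSet (EE (k+1)) := fun k => (hstep k).2.2.2.2.1
  have hEμ : ∀ k, μ (EE (k+1)) ≤ ENNReal.ofReal (dd (k+1)) := fun k => (hstep k).2.2.2.2.2.1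
  have hEbig : ∀ k, ε₁ < |∫ y in EE (k+1), h (nn (k+1)) y ∂μ| := fun k => (hstep k).2.2.2.2.2.2
  have hE0 : EE 0 = ∅ := rfl
  have hEmeas' : ∀ k, MeasurableSet (EE k) := by
    intro k
    cases k with
    | zero => rw [hE0]; exact MeasurableSet.empty
    | succ k => exact hEmeas k
  set U : ℕ → Set ℝ := fun k => ⋃ j, EE (k + 1 + j) with hUdef
  have hUmeas : ∀ k, MeasurableSet (U k) := fun k => MeasurableSet.iUnion fun j => hEmeas' _
  have hUμ : ∀ k, μ (U k) ≤ ENNReal.ofReal (2 * dd (k+1)) := by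
    intro k
    have hsum : Summable (fun j : ℕ => dd (k+1) * (1/2)^j) :=
      (summable_geometric_of_lt_one (by norm_num) (by norm_num)).mul_left _
    calc μ (U k) ≤ ∑' j, μ (EE (k + 1 + j)) := measure_iUnion_le _
      _ ≤ ∑' j, ENNReal.ofReal (dd (k+1) * (1/2)^j) := by
          refine ENNReal.tsum_le_tsum fun j => ?_
          refine le_trans ?_ (ENNReal.ofReal_le_ofReal (hdhalf (k+1) j))
          have : k + 1 + j = (k + j) + 1 := by ring
          rw [this]
          exact hEμ (k + j)
      _ = ENNReal.ofReal (∑' j, dd (k+1) * (1/2)^j) :=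
          (ENNReal.ofReal_tsum_of_nonneg (fun j => mul_nonneg (hdpos _).le (by positivity)) hsum).symm
      _ = ENNReal.ofReal (2 * dd (k+1)) := by
          rw [tsum_mul_left, tsum_geometric_of_lt_one (by norm_num) (by norm_num)]
          congr 1; ring
  have hUsmall : ∀ k, ∀ S : Set ℝ, MeasurableSet S → S ⊆ U k →
      ∫ y in S, |h (nn k) y| ∂μ ≤ ε₁ / 32 ∧ ∫ y in S, |g y| ∂μ ≤ ε₁ / 32 := fun k S hS hsub =>
    (hstep k).2.2.1 S hS ((measure_mono hsub).trans (hUμ k))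
  have hUanti : ∀ j k, j ≤ k → U k ⊆ U j := by
    intro j k hjk
    refine Set.iUnion_subset fun m => ?_
    have : k + 1 + m = j + 1 + (k - j + m) := by omega
    rw [this]
    exact Set.subset_iUnion (fun i => EE (j + 1 + i)) (k - j + m)
  set F : ℕ → Set ℝ := fun k => EE k \ U k with hFdef
  have hFmeas : ∀ k, MeasurableSet (F k) := fun k => (hEmeas' k).diff (hUmeas k)
  have hFsubE : ∀ k, F k ⊆ EE k := fun k => Set.diff_subset
  have hEsubU : ∀ j k, j < k → EE k ⊆ U j := by
    intro j k hjk
    have : k = j + 1 + (k - j - 1) := by omega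
    rw [this]
    exact Set.subset_iUnion (fun i => EE (j + 1 + i)) (k - j - 1)
  have hFU : ∀ j k, j ≤ k → Disjoint (F j) (U k) := by
    intro j k hjk
    exact Set.disjoint_of_subset_right (hUanti j k hjk) (Set.disjoint_sdiff_left)
  have hFdisj : ∀ j k, j < k → Disjoint (F j) (F k) := by
    intro j k hjk
    refine Set.disjoint_of_subset_right ((hFsubE k).trans (hEsubU j k hjk)) ?_
    exact Set.disjoint_sdiff_left
  have hFbig : ∀ k, 1 ≤ k → ε₁ * (31/32) ≤ |∫ y in F k, h (nn k) y ∂μ| := by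
    intro k0 hk0
    obtain ⟨k, rfl⟩ := Nat.exists_eq_succ_of_ne_zero (by omega : k0 ≠ 0)
    have hsplit : ∫ y in EE (k+1), h (nn (k+1)) y ∂μ =
        ∫ y in F (k+1), h (nn (k+1)) y ∂μ + ∫ y in EE (k+1) ∩ U (k+1), h (nn (k+1)) y ∂μ := by
      rw [← setIntegral_union Set.disjoint_sdiff_inter ((hEmeas k).inter (hUmeas (k+1)))
        (hint _).integrableOn (hint _).integrableOn, Set.diff_union_inter]
    have h2 : |∫ y in EE (k+1) ∩ U (k+1), h (nn (k+1)) y ∂μ| ≤ ε₁ / 32 :=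
      (st16_absInt _ _).trans (hUsmall (k+1) _ ((hEmeas k).inter (hUmeas (k+1)))
        Set.inter_subset_right).1
    have h3 := hEbig k
    rw [hsplit] at h3
    have h4 := abs_add_le (∫ y in F (k+1), h (nn (k+1)) y ∂μ)
      (∫ y in EE (k+1) ∩ U (k+1), h (nn (k+1)) y ∂μ)
    linarith [h3.trans_le h4]
  -- second recursion: selecting a sub-subsequence
  have step2 : ∀ K : ℕ, ∃ k : ℕ, K < k ∧ ∀ m, m ≤ K →
      |∫ y in F m, h (nn k) y ∂μ - ∫ y in F m, g y ∂μ| ≤ ε₁ / (64 * (K + 1)) := by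
    intro K
    have hc : (0:ℝ) < ε₁ / (64 * (K + 1)) := by positivity
    have hall : ∀ᶠ ν in atTop, ∀ m ∈ Finset.range (K+1),
        |∫ y in F m, h ν y ∂μ - ∫ y in F m, g y ∂μ| ≤ ε₁ / (64 * (K + 1)) := by
      rw [eventually_all_finset]
      intro m _
      have h1 := Metric.tendsto_atTop.1 (hconv (F m) (hFmeas m)) _ hc
      obtain ⟨N, hN⟩ := h1
      refine eventually_atTop.2 ⟨N, fun ν hν => ?_⟩
      have := hN ν hν
      rw [Real.dist_eq] at this
      exact this.le
    obtain ⟨N, hN⟩ := eventually_atTop.1 hall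
    refine ⟨max (K+1) N, lt_of_lt_of_le (Nat.lt_succ_self K) (le_max_left _ _), fun m hm => ?_⟩
    exact hN (nn (max (K+1) N)) (le_trans (le_max_right _ _) hnmono.le_apply) m
      (Finset.mem_range_succ_iff.2 hm)
  set t : ℕ → ℕ := fun i => (fun K => Classical.choose (step2 K))^[i] 0 with htdef
  have ht_succ : ∀ i, t (i+1) = Classical.choose (step2 (t i)) := fun i =>
    Function.iterate_succ_apply' _ i _
  have htmono : StrictMono t := strictMono_nat_of_lt_succ fun i => by
    rw [ht_succ]; exact (Classical.choose_spec (step2 (t i))).1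
  have hspec2 : ∀ i, ∀ m, m ≤ t i →
      |∫ y in F m, h (nn (t (i+1))) y ∂μ - ∫ y in F m, g y ∂μ| ≤ ε₁ / (64 * (t i + 1)) := by
    intro i
    rw [ht_succ]
    exact (Classical.choose_spec (step2 (t i))).2
  have ht1 : ∀ i, 1 ≤ i → 1 ≤ t i := fun i hi => le_trans hi htmono.le_apply
  -- the sets A and B
  set c : ℕ → ℝ := fun i => ∫ y in F (t i), h (nn (t i)) y ∂μ with hcdef
  set A : Set ℝ := ⋃ (i : ℕ) (_ : 1 ≤ i ∧ 0 ≤ c i), F (t i) with hAdef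
  set B : Set ℝ := ⋃ (i : ℕ) (_ : 1 ≤ i ∧ ¬ 0 ≤ c i), F (t i) with hBdef
  have hAmeas : MeasurableSet A := MeasurableSet.iUnion fun i => MeasurableSet.iUnion fun _ => hFmeas _
  have hBmeas : MeasurableSet B := MeasurableSet.iUnion fun i => MeasurableSet.iUnion fun _ => hFmeas _
  have htb : ∀ j, 1 ≤ j → F (t j) ⊆ U 0 := fun j hj =>
    (hFsubE _).trans (hEsubU 0 (t j) (ht1 j hj))
  have hAsub : A ⊆ U 0 := Set.iUnion₂_subset fun j hj => htb j hj.1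
  have hBsub : B ⊆ U 0 := Set.iUnion₂_subset fun j hj => htb j hj.1
  -- the key lower bound
  have hD : ∀ i, 1 ≤ i →
      ε₁ / 2 ≤ (∫ y in A, h (nn (t i)) y ∂μ) - ∫ y in B, h (nn (t i)) y ∂μ := by
    intro i hi
    obtain ⟨i0, rfl⟩ := Nat.exists_eq_succ_of_ne_zero (by omega : i ≠ 0)
    set i := i0 + 1
    set w : ℝ → ℝ := h (nn (t i)) with hwdef
    set S1 : Finset ℕ := (Finset.range i).filter (fun j => 1 ≤ j ∧ 0 ≤ c j) with hS1def
    set S1' : Finset ℕ := (Finset.range i).filter (fun j => 1 ≤ j ∧ ¬ 0 ≤ c j) with hS1'def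
    set P : Set ℝ := ⋃ j ∈ S1, F (t j) with hPdef
    set P' : Set ℝ := ⋃ j ∈ S1', F (t j) with hP'def
    set G2 : Set ℝ := U (t i) with hG2def
    have hPmeas : MeasurableSet P := S1.measurableSet_biUnion fun j _ => hFmeas _
    have hP'meas : MeasurableSet P' := S1'.measurableSet_biUnion fun j _ => hFmeas _
    have hG2meas : MeasurableSet G2 := hUmeas _
    -- disjointness facts
    have hFiP : Disjoint (F (t i)) P := by
      rw [Set.disjoint_iUnion₂_right]
      intro j hj
      have hji : j < i := Finset.mem_range.1 (Finset.mem_filter.1 hj).1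
      exact (hFdisj (t j) (t i) (htmono hji)).symm
    have hFiP' : Disjoint (F (t i)) P' := by
      rw [Set.disjoint_iUnion₂_right]
      intro j hj
      have hji : j < i := Finset.mem_range.1 (Finset.mem_filter.1 hj).1
      exact (hFdisj (t j) (t i) (htmono hji)).symm
    have hFiG2 : Disjoint (F (t i)) G2 := hFU (t i) (t i) le_rfl
    have hPG2 : Disjoint P G2 := by
      rw [Set.disjoint_iUnion₂_left]
      intro j hj
      have hji : j < i := Finset.mem_range.1 (Finset.mem_filter.1 hj).1
      exact hFU (t j) (t i) (htmono hji).le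
    have hP'G2 : Disjoint P' G2 := by
      rw [Set.disjoint_iUnion₂_left]
      intro j hj
      have hji : j < i := Finset.mem_range.1 (Finset.mem_filter.1 hj).1
      exact hFU (t j) (t i) (htmono hji).le
    -- decomposition of A and B
    have hmemA : ∀ x, x ∈ A ↔ ∃ j, (1 ≤ j ∧ 0 ≤ c j) ∧ x ∈ F (t j) := by
      intro x
      simp only [hAdef, Set.mem_iUnion, exists_prop]
    have hmemB : ∀ x, x ∈ B ↔ ∃ j, (1 ≤ j ∧ ¬ 0 ≤ c j) ∧ x ∈ F (t j) := by
      intro x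
      simp only [hBdef, Set.mem_iUnion, exists_prop]
    have hmemP : ∀ x, x ∈ P ↔ ∃ j, j ∈ S1 ∧ x ∈ F (t j) := by
      intro x
      simp only [hPdef, Set.mem_iUnion, exists_prop]
    have hmemP' : ∀ x, x ∈ P' ↔ ∃ j, j ∈ S1' ∧ x ∈ F (t j) := by
      intro x
      simp only [hP'def, Set.mem_iUnion, exists_prop]
    have hcase : ∀ (x : ℝ) (j : ℕ), 1 ≤ j → x ∈ F (t j) → j < i ∨ j = i ∨ (j > i ∧ x ∈ G2) := by
      intro x j hj hx
      rcases lt_trichotomy j i with hlt | heq | hgt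
      · exact Or.inl hlt
      · exact Or.inr (Or.inl heq)
      · refine Or.inr (Or.inr ⟨hgt, ?_⟩)
        exact (hEsubU (t i) (t j) (htmono hgt)) ((hFsubE _) hx)
    -- integral bounds over pieces
    have hG2bound : ∀ S : Set ℝ, MeasurableSet S → S ⊆ G2 → |∫ y in S, w y ∂μ| ≤ ε₁ / 32 :=
      fun S hS hsub => (st16_absInt _ _).trans (hUsmall (t i) S hS hsub).1
    have hsum_bound : ∀ T : Finset ℕ, T ⊆ Finset.range i →
        (∀ j ∈ T, 1 ≤ j) → |∑ j ∈ T, ∫ y in F (t j), w y ∂μ| ≤ ε₁ / 32 + ε₁ / 64 := by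
      intro T hTsub hT1
      have htj : ∀ j ∈ T, t j ≤ t i0 := fun j hj =>
        htmono.monotone (Nat.lt_succ_iff.1 (Finset.mem_range.1 (hTsub hj)))
      have h1 : ∀ j ∈ T, |∫ y in F (t j), w y ∂μ| ≤
          |∫ y in F (t j), g y ∂μ| + ε₁ / (64 * (t i0 + 1)) := by
        intro j hj
        have h2 := hspec2 i0 (t j) (htj j hj)
        calc |∫ y in F (t j), w y ∂μ| ≤
            |∫ y in F (t j), g y ∂μ| + |∫ y in F (t j), w y ∂μ - ∫ y in F (t j), g y ∂μ| := by
              have := abs_sub_abs_le_abs_sub (∫ y in F (t j), w y ∂μ) (∫ y in F (t j), g y ∂μ)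
              linarith
          _ ≤ |∫ y in F (t j), g y ∂μ| + ε₁ / (64 * (t i0 + 1)) := by
              exact (add_le_add_iff_left _).2 h2
      have h3 : |∑ j ∈ T, ∫ y in F (t j), w y ∂μ| ≤
          ∑ j ∈ T, (|∫ y in F (t j), g y ∂μ| + ε₁ / (64 * (t i0 + 1))) :=
        (Finset.abs_sum_le_sum_abs _ _).trans (Finset.sum_le_sum h1)
      rw [Finset.sum_add_distrib, Finset.sum_const, nsmul_eq_mul] at h3
      have hTdisj : (↑T : Set ℕ).Pairwise (Function.onFun Disjoint fun j => F (t j)) := by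
        intro j _ k _ hjk
        rcases lt_or_gt_of_ne hjk with hlt | hgt
        · exact hFdisj (t j) (t k) (htmono hlt)
        · exact (hFdisj (t k) (t j) (htmono hgt)).symm
      have h4 : ∑ j ∈ T, |∫ y in F (t j), g y ∂μ| ≤ ε₁ / 32 := by
        have h5 : ∑ j ∈ T, |∫ y in F (t j), g y ∂μ| ≤ ∑ j ∈ T, ∫ y in F (t j), |g y| ∂μ :=
          Finset.sum_le_sum fun j _ => st16_absInt _ _
        have h6 : ∑ j ∈ T, ∫ y in F (t j), |g y| ∂μ = ∫ y in ⋃ j ∈ T, F (t j), |g y| ∂μ :=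
          (integral_biUnion_finset T (fun j _ => hFmeas _) hTdisj
            (fun j _ => hgint.abs.integrableOn)).symm
        have h7 : (⋃ j ∈ T, F (t j)) ⊆ U 0 := Set.iUnion₂_subset fun j hj => htb j (hT1 j hj)
        have h8 := (hUsmall 0 _ (T.measurableSet_biUnion fun j _ => hFmeas _) h7).2
        linarith
      have hcard : (T.card : ℝ) ≤ (t i0 : ℝ) + 1 := by
        have h9 : T.card ≤ i := le_trans (Finset.card_le_card hTsub) (by simp)
        have h10 : i ≤ t i0 + 1 := Nat.succ_le_succ htmono.le_apply
        exact_mod_cast le_trans h9 h10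
      have hpos : (0:ℝ) < t i0 + 1 := by positivity
      have h11 : (T.card : ℝ) * (ε₁ / (64 * (t i0 + 1))) ≤ ε₁ / 64 := by
        have hq : (0:ℝ) ≤ ε₁ / (64 * (t i0 + 1)) := by positivity
        have h12 : (T.card : ℝ) * (ε₁ / (64 * (t i0 + 1))) ≤
            ((t i0 : ℝ) + 1) * (ε₁ / (64 * (t i0 + 1))) := mul_le_mul_of_nonneg_right hcard hq
        have h13 : ((t i0 : ℝ) + 1) * (ε₁ / (64 * (t i0 + 1))) = ε₁ / 64 := by
          field_simp
        linarith
      linarith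
    -- case split on the sign of c i
    rcases le_or_gt 0 (c i) with hci | hci
    · -- F (t i) ⊆ A
      have hAeq : A = F (t i) ∪ (P ∪ A ∩ G2) := by
        ext x
        constructor
        · intro hx
          obtain ⟨j, ⟨hj1, hjc⟩, hxj⟩ := (hmemA x).1 hx
          rcases hcase x j hj1 hxj with hlt | rfl | ⟨_, hG⟩
          · exact Or.inr (Or.inl ((hmemP x).2 ⟨j, Finset.mem_filter.2
              ⟨Finset.mem_range.2 hlt, hj1, hjc⟩, hxj⟩))
          · exact Or.inl hxj
          · exact Or.inr (Or.inr ⟨hx, hG⟩)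
        · intro hx
          rcases hx with hx | hx | hx
          · exact (hmemA x).2 ⟨i, ⟨le_refl 1 |>.trans (by omega), hci⟩, hx⟩
          · obtain ⟨j, hj, hxj⟩ := (hmemP x).1 hx
            obtain ⟨_, hj1, hjc⟩ := Finset.mem_filter.1 hj
            exact (hmemA x).2 ⟨j, ⟨hj1, hjc⟩, hxj⟩
          · exact hx.1
      have hBeq : B = P' ∪ B ∩ G2 := by
        ext x
        constructor
        · intro hx
          obtain ⟨j, ⟨hj1, hjc⟩, hxj⟩ := (hmemB x).1 hx
          rcases hcase x j hj1 hxj with hlt | rfl | ⟨_, hG⟩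
          · exact Or.inl ((hmemP' x).2 ⟨j, Finset.mem_filter.2
              ⟨Finset.mem_range.2 hlt, hj1, hjc⟩, hxj⟩)
          · exact absurd hci hjc
          · exact Or.inr ⟨hx, hG⟩
        · intro hx
          rcases hx with hx | hx
          · obtain ⟨j, hj, hxj⟩ := (hmemP' x).1 hx
            obtain ⟨_, hj1, hjc⟩ := Finset.mem_filter.1 hj
            exact (hmemB x).2 ⟨j, ⟨hj1, hjc⟩, hxj⟩
          · exact hx.1
      have hIA : ∫ y in A, w y ∂μ = c i + (∫ y in P, w y ∂μ + ∫ y in A ∩ G2, w y ∂μ) := by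
        conv_lhs => rw [hAeq]
        rw [setIntegral_union (Set.disjoint_union_right.2
            ⟨hFiP, Set.disjoint_of_subset_right Set.inter_subset_right hFiG2⟩)
            (hPmeas.union (hAmeas.inter hG2meas)) (hint _).integrableOn (hint _).integrableOn,
          setIntegral_union (Set.disjoint_of_subset_right Set.inter_subset_right hPG2)
            (hAmeas.inter hG2meas) (hint _).integrableOn (hint _).integrableOn]
      have hIB : ∫ y in B, w y ∂μ = ∫ y in P', w y ∂μ + ∫ y in B ∩ G2, w y ∂μ := by
        conv_lhs => rw [hBeq]
        rw [setIntegral_union (Set.disjoint_of_subset_right Set.inter_subset_right hP'G2)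
          (hBmeas.inter hG2meas) (hint _).integrableOn (hint _).integrableOn]
      have hPsum : ∫ y in P, w y ∂μ = ∑ j ∈ S1, ∫ y in F (t j), w y ∂μ := by
        apply integral_biUnion_finset S1 (fun j _ => hFmeas _) _ (fun j _ => (hint _).integrableOn)
        intro j _ k _ hjk
        rcases lt_or_gt_of_ne hjk with hlt | hgt
        · exact hFdisj (t j) (t k) (htmono hlt)
        · exact (hFdisj (t k) (t j) (htmono hgt)).symm
      have hP'sum : ∫ y in P', w y ∂μ = ∑ j ∈ S1', ∫ y in F (t j), w y ∂μ := by
        apply integral_biUnion_finset S1' (fun j _ => hFmeas _) _ (fun j _ => (hint _).integrableOn)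
        intro j _ k _ hjk
        rcases lt_or_gt_of_ne hjk with hlt | hgt
        · exact hFdisj (t j) (t k) (htmono hlt)
        · exact (hFdisj (t k) (t j) (htmono hgt)).symm
      have hb1 : |∫ y in P, w y ∂μ| ≤ ε₁ / 32 + ε₁ / 64 := by
        rw [hPsum]
        exact hsum_bound S1 (Finset.filter_subset _ _) fun j hj => (Finset.mem_filter.1 hj).2.1
      have hb1' : |∫ y in P', w y ∂μ| ≤ ε₁ / 32 + ε₁ / 64 := by
        rw [hP'sum]
        exact hsum_bound S1' (Finset.filter_subset _ _) fun j hj => (Finset.mem_filter.1 hj).2.1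
      have hb2 : |∫ y in A ∩ G2, w y ∂μ| ≤ ε₁ / 32 :=
        hG2bound _ (hAmeas.inter hG2meas) Set.inter_subset_right
      have hb2' : |∫ y in B ∩ G2, w y ∂μ| ≤ ε₁ / 32 :=
        hG2bound _ (hBmeas.inter hG2meas) Set.inter_subset_right
      have hbig : ε₁ * (31/32) ≤ c i := by
        have := hFbig (t i) (ht1 i (by omega))
        rwa [abs_of_nonneg hci] at this
      rw [hIA, hIB]
      have l1 := abs_le.1 hb1
      have l1' := abs_le.1 hb1'
      have l2 := abs_le.1 hb2
      have l2' := abs_le.1 hb2'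
      linarith [l1.1, l1'.2, l2.1, l2'.2]
    · -- F (t i) ⊆ B
      have hci' : ¬ 0 ≤ c i := not_le.2 hci
      have hBeq : B = F (t i) ∪ (P' ∪ B ∩ G2) := by
        ext x
        constructor
        · intro hx
          obtain ⟨j, ⟨hj1, hjc⟩, hxj⟩ := (hmemB x).1 hx
          rcases hcase x j hj1 hxj with hlt | rfl | ⟨_, hG⟩
          · exact Or.inr (Or.inl ((hmemP' x).2 ⟨j, Finset.mem_filter.2
              ⟨Finset.mem_range.2 hlt, hj1, hjc⟩, hxj⟩))
          · exact Or.inl hxj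
          · exact Or.inr (Or.inr ⟨hx, hG⟩)
        · intro hx
          rcases hx with hx | hx | hx
          · exact (hmemB x).2 ⟨i, ⟨by omega, hci'⟩, hx⟩
          · obtain ⟨j, hj, hxj⟩ := (hmemP' x).1 hx
            obtain ⟨_, hj1, hjc⟩ := Finset.mem_filter.1 hj
            exact (hmemB x).2 ⟨j, ⟨hj1, hjc⟩, hxj⟩
          · exact hx.1
      have hAeq : A = P ∪ A ∩ G2 := by
        ext x
        constructor
        · intro hx
          obtain ⟨j, ⟨hj1, hjc⟩, hxj⟩ := (hmemA x).1 hx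
          rcases hcase x j hj1 hxj with hlt | rfl | ⟨_, hG⟩
          · exact Or.inl ((hmemP x).2 ⟨j, Finset.mem_filter.2
              ⟨Finset.mem_range.2 hlt, hj1, hjc⟩, hxj⟩)
          · exact absurd hjc hci'
          · exact Or.inr ⟨hx, hG⟩
        · intro hx
          rcases hx with hx | hx
          · obtain ⟨j, hj, hxj⟩ := (hmemP x).1 hx
            obtain ⟨_, hj1, hjc⟩ := Finset.mem_filter.1 hj
            exact (hmemA x).2 ⟨j, ⟨hj1, hjc⟩, hxj⟩
          · exact hx.1
      have hIB : ∫ y in B, w y ∂μ = c i + (∫ y in P', w y ∂μ + ∫ y in B ∩ G2, w y ∂μ) := by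
        conv_lhs => rw [hBeq]
        rw [setIntegral_union (Set.disjoint_union_right.2
            ⟨hFiP', Set.disjoint_of_subset_right Set.inter_subset_right hFiG2⟩)
            (hP'meas.union (hBmeas.inter hG2meas)) (hint _).integrableOn (hint _).integrableOn,
          setIntegral_union (Set.disjoint_of_subset_right Set.inter_subset_right hP'G2)
            (hBmeas.inter hG2meas) (hint _).integrableOn (hint _).integrableOn]
      have hIA : ∫ y in A, w y ∂μ = ∫ y in P, w y ∂μ + ∫ y in A ∩ G2, w y ∂μ := by
        conv_lhs => rw [hAeq]
        rw [setIntegral_union (Set.disjoint_of_subset_right Set.inter_subset_right hPG2)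
          (hAmeas.inter hG2meas) (hint _).integrableOn (hint _).integrableOn]
      have hPsum : ∫ y in P, w y ∂μ = ∑ j ∈ S1, ∫ y in F (t j), w y ∂μ := by
        apply integral_biUnion_finset S1 (fun j _ => hFmeas _) _ (fun j _ => (hint _).integrableOn)
        intro j _ k _ hjk
        rcases lt_or_gt_of_ne hjk with hlt | hgt
        · exact hFdisj (t j) (t k) (htmono hlt)
        · exact (hFdisj (t k) (t j) (htmono hgt)).symm
      have hP'sum : ∫ y in P', w y ∂μ = ∑ j ∈ S1', ∫ y in F (t j), w y ∂μ := by
        apply integral_biUnion_finset S1' (fun j _ => hFmeas _) _ (fun j _ => (hint _).integrableOn)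
        intro j _ k _ hjk
        rcases lt_or_gt_of_ne hjk with hlt | hgt
        · exact hFdisj (t j) (t k) (htmono hlt)
        · exact (hFdisj (t k) (t j) (htmono hgt)).symm
      have hb1 : |∫ y in P, w y ∂μ| ≤ ε₁ / 32 + ε₁ / 64 := by
        rw [hPsum]
        exact hsum_bound S1 (Finset.filter_subset _ _) fun j hj => (Finset.mem_filter.1 hj).2.1
      have hb1' : |∫ y in P', w y ∂μ| ≤ ε₁ / 32 + ε₁ / 64 := by
        rw [hP'sum]
        exact hsum_bound S1' (Finset.filter_subset _ _) fun j hj => (Finset.mem_filter.1 hj).2.1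
      have hb2 : |∫ y in A ∩ G2, w y ∂μ| ≤ ε₁ / 32 :=
        hG2bound _ (hAmeas.inter hG2meas) Set.inter_subset_right
      have hb2' : |∫ y in B ∩ G2, w y ∂μ| ≤ ε₁ / 32 :=
        hG2bound _ (hBmeas.inter hG2meas) Set.inter_subset_right
      have hbig : c i ≤ -(ε₁ * (31/32)) := by
        have := hFbig (t i) (ht1 i (by omega))
        rw [abs_of_neg hci] at this
        linarith
      rw [hIA, hIB]
      have l1 := abs_le.1 hb1
      have l1' := abs_le.1 hb1'
      have l2 := abs_le.1 hb2
      have l2' := abs_le.1 hb2'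
      linarith [l1.1, l1'.2, l2.1, l2'.2]
  -- final contradiction
  have hAg : |∫ y in A, g y ∂μ| ≤ ε₁ / 32 :=
    (st16_absInt _ _).trans (hUsmall 0 A hAmeas hAsub).2
  have hBg : |∫ y in B, g y ∂μ| ≤ ε₁ / 32 :=
    (st16_absInt _ _).trans (hUsmall 0 B hBmeas hBsub).2
  have hlim := (hconv A hAmeas).sub (hconv B hBmeas)
  obtain ⟨N, hN⟩ := Metric.tendsto_atTop.1 hlim (ε₁ / 4) (by positivity)
  have hni : N ≤ nn (t (N + 1)) :=
    le_trans (Nat.le_succ N) (le_trans htmono.le_apply hnmono.le_apply)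
  have h5 := hN (nn (t (N + 1))) hni
  rw [Real.dist_eq] at h5
  have h6 := hD (N + 1) (by omega)
  have h7 := abs_lt.1 h5
  have h8 := abs_le.1 hAg
  have h9 := abs_le.1 hBg
  linarith [h7.2, h8.2, h9.1, h6]



lemma st16_bound {c δ ε : ℝ} (hδ : 0 < δ) {h : ℝ → ℝ}
    (hint : Integrable h (volume.restrict (Ioo 0 c)))
    (hui : ∀ E : Set ℝ, MeasurableSet E →
      (volume.restrict (Ioo 0 c)) E ≤ ENNReal.ofReal δ →
      ∫ x in E, |h x| ∂(volume.restrict (Ioo 0 c)) ≤ ε) :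
    ∫ x, |h x| ∂(volume.restrict (Ioo 0 c)) ≤ (⌈c / δ⌉₊ : ℝ) * ε := by
  set μ := volume.restrict (Ioo 0 c) with hμdef
  set K := ⌈c / δ⌉₊ with hKdef
  set S : ℕ → Set ℝ := fun k => Ico ((k : ℝ) * δ) (((k : ℝ) + 1) * δ) with hSdef
  have hSmeas : ∀ k, MeasurableSet (S k) := fun k => measurableSet_Ico
  have hμS : ∀ k : ℕ, μ (S k) ≤ ENNReal.ofReal δ := by
    intro k
    rw [hμdef, Measure.restrict_apply (hSmeas k)]
    calc volume (S k ∩ Ioo 0 c) ≤ volume (S k) := measure_mono Set.inter_subset_left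
      _ = ENNReal.ofReal (((k : ℝ) + 1) * δ - (k : ℝ) * δ) := Real.volume_Ico
      _ = ENNReal.ofReal δ := by ring_nf
  have hcover : Ioo (0:ℝ) c ⊆ ⋃ k ∈ Finset.range K, S k := by
    intro x hx
    have hxδ : 0 ≤ x / δ := div_nonneg hx.1.le hδ.le
    have hck : c ≤ (K : ℝ) * δ := by
      rw [← div_le_iff₀ hδ]
      exact Nat.le_ceil _
    have hfl : ⌊x / δ⌋₊ < K := by
      rw [Nat.floor_lt hxδ, div_lt_iff₀ hδ]
      exact lt_of_lt_of_le hx.2 hck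
    refine Set.mem_biUnion (Finset.mem_range.2 hfl) ⟨?_, ?_⟩
    · rw [← le_div_iff₀ hδ]
      exact Nat.floor_le hxδ
    · rw [← div_lt_iff₀ hδ]
      exact Nat.lt_floor_add_one (x / δ)
  have hUmeas : MeasurableSet (⋃ k ∈ Finset.range K, S k) :=
    (Finset.range K).measurableSet_biUnion fun k _ => hSmeas k
  have h0 : ∫ x, |h x| ∂μ = (∫ x in (⋃ k ∈ Finset.range K, S k), |h x| ∂μ) +
      ∫ x in (⋃ k ∈ Finset.range K, S k)ᶜ, |h x| ∂μ := (integral_add_compl hUmeas hint.abs).symm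
  have hμc : μ ((⋃ k ∈ Finset.range K, S k)ᶜ) = 0 := by
    rw [hμdef, Measure.restrict_apply hUmeas.compl]
    have he : (⋃ k ∈ Finset.range K, S k)ᶜ ∩ Ioo 0 c = ∅ := by
      rw [Set.eq_empty_iff_forall_notMem]
      rintro x ⟨hxc, hxI⟩
      exact hxc (hcover hxI)
    rw [he]
    exact measure_empty
  have h1 : ∫ x in (⋃ k ∈ Finset.range K, S k)ᶜ, |h x| ∂μ = 0 := by
    rw [Measure.restrict_eq_zero.2 hμc]
    exact integral_zero_measure _
  have hdisj : (↑(Finset.range K) : Set ℕ).Pairwise (Function.onFun Disjoint S) := by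
    intro j _ k _ hjk
    have key : ∀ {j k : ℕ}, j < k → Disjoint (S j) (S k) := by
      intro j k hlt
      rw [Set.Ico_disjoint_Ico]
      have hj1 : ((j : ℝ) + 1) * δ ≤ (k : ℝ) * δ := by
        have : ((j : ℝ) + 1) ≤ (k : ℝ) := by exact_mod_cast hlt
        exact mul_le_mul_of_nonneg_right this hδ.le
      exact le_trans (min_le_left _ _) (le_trans hj1 (le_max_right _ _))
    rcases lt_or_gt_of_ne hjk with hlt | hgt
    · exact key hlt
    · exact (key hgt).symm
  have h2 : ∫ x in (⋃ k ∈ Finset.range K, S k), |h x| ∂μ =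
      ∑ k ∈ Finset.range K, ∫ x in S k, |h x| ∂μ :=
    integral_biUnion_finset _ (fun k _ => hSmeas k) hdisj fun k _ => hint.abs.integrableOn
  have h3 : ∑ k ∈ Finset.range K, ∫ x in S k, |h x| ∂μ ≤ (K : ℝ) * ε := by
    calc ∑ k ∈ Finset.range K, ∫ x in S k, |h x| ∂μ ≤ ∑ _k ∈ Finset.range K, ε :=
        Finset.sum_le_sum fun k _ => hui (S k) (hSmeas k) (hμS k)
      _ = (K : ℝ) * ε := by rw [Finset.sum_const, Finset.card_range, nsmul_eq_mul]
  rw [h0, h1, h2]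
  simpa using h3

set_option maxHeartbeats 1000000 in
theorem stmt16 (a b : ℝ) (ha : 0 < a) (hab : a ≤ b)
    (Ω : ℝ → ℝ → ℝ) (hΩmeas : Measurable (Function.uncurry Ω))
    (hΩbdd : ∃ C : ℝ, ∀ x ∈ Set.Ioo (0 : ℝ) a, ∀ y ∈ Set.Ioo (0 : ℝ) b, |Ω x y| ≤ C)
    (fn : ℕ → ℝ → ℝ) (f : ℝ → ℝ) (gn : ℕ → ℝ → ℝ) (g : ℝ → ℝ)
    (hfn : ∀ n, IntegrableOn (fn n) (Set.Ioo 0 a)) (hf : IntegrableOn f (Set.Ioo 0 a))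
    (hgn : ∀ n, IntegrableOn (gn n) (Set.Ioo 0 b)) (hg : IntegrableOn g (Set.Ioo 0 b))
    (hfweak : ∀ φ : ℝ → ℝ, Measurable φ → (∃ C : ℝ, ∀ x, |φ x| ≤ C) →
      Tendsto (fun n => ∫ x in Set.Ioo (0 : ℝ) a, fn n x * φ x) atTop
        (nhds (∫ x in Set.Ioo (0 : ℝ) a, f x * φ x)))
    (hgweak : ∀ φ : ℝ → ℝ, Measurable φ → (∃ C : ℝ, ∀ x, |φ x| ≤ C) →
      Tendsto (fun n => ∫ y in Set.Ioo (0 : ℝ) b, gn n y * φ y) atTop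
        (nhds (∫ y in Set.Ioo (0 : ℝ) b, g y * φ y))) :
    Tendsto
      (fun n => ∫ x in Set.Ioo (0 : ℝ) a, ∫ y in Set.Ioo (0 : ℝ) b, Ω x y * fn n x * gn n y)
      atTop
      (nhds (∫ x in Set.Ioo (0 : ℝ) a, ∫ y in Set.Ioo (0 : ℝ) b, Ω x y * f x * g y)) := by
  classical
  obtain ⟨C₀, hC₀⟩ := hΩbdd
  set C := max C₀ 0 with hCdef
  have hC : 0 ≤ C := le_max_right _ _
  set W : ℝ → ℝ → ℝ := fun x y => max (-C) (min C (Ω x y)) with hWdef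
  have hWmeas : Measurable (Function.uncurry W) :=
    measurable_const.max (measurable_const.min hΩmeas)
  have hWbdd : ∀ x y, |W x y| ≤ C := by
    intro x y
    rw [abs_le]
    exact ⟨le_max_left _ _, max_le (by linarith) (min_le_left _ _)⟩
  have hWeq : ∀ x ∈ Ioo (0:ℝ) a, ∀ y ∈ Ioo (0:ℝ) b, W x y = Ω x y := by
    intro x hx y hy
    have h2 : |Ω x y| ≤ C := (hC₀ x hx y hy).trans (le_max_left _ _)
    obtain ⟨h3, h4⟩ := abs_le.1 h2
    show max (-C) (min C (Ω x y)) = Ω x y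
    rw [min_eq_right h4, max_eq_right h3]
  have hb : 0 < b := lt_of_lt_of_le ha hab
  set μa := volume.restrict (Ioo (0:ℝ) a) with hμadef
  set μb := volume.restrict (Ioo (0:ℝ) b) with hμbdef
  haveI hfina : IsFiniteMeasure μa := by
    refine ⟨?_⟩
    rw [hμadef, Measure.restrict_apply_univ, Real.volume_Ioo]
    exact ENNReal.ofReal_lt_top
  haveI hfinb : IsFiniteMeasure μb := by
    refine ⟨?_⟩
    rw [hμbdef, Measure.restrict_apply_univ, Real.volume_Ioo]
    exact ENNReal.ofReal_lt_top
  -- integrability as plain Integrable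
  have hfnint : ∀ ν, Integrable (fn ν) μa := fun ν => hfn ν
  have hfint : Integrable f μa := hf
  have hgnint : ∀ ν, Integrable (gn ν) μb := fun ν => hgn ν
  have hgint : Integrable g μb := hg
  -- measurable representatives
  set fn' : ℕ → ℝ → ℝ := fun ν => (hfnint ν).1.mk (fn ν) with hfn'def
  have hfn'sm : ∀ ν, StronglyMeasurable (fn' ν) := fun ν => (hfnint ν).1.stronglyMeasurable_mk
  have hfn'ae : ∀ ν, fn ν =ᵐ[μa] fn' ν := fun ν => (hfnint ν).1.ae_eq_mk
  have hfn'int : ∀ ν, Integrable (fn' ν) μa := fun ν => (hfnint ν).congr (hfn'ae ν)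
  set gn' : ℕ → ℝ → ℝ := fun ν => (hgnint ν).1.mk (gn ν) with hgn'def
  have hgn'sm : ∀ ν, StronglyMeasurable (gn' ν) := fun ν => (hgnint ν).1.stronglyMeasurable_mk
  have hgn'ae : ∀ ν, gn ν =ᵐ[μb] gn' ν := fun ν => (hgnint ν).1.ae_eq_mk
  have hgn'int : ∀ ν, Integrable (gn' ν) μb := fun ν => (hgnint ν).congr (hgn'ae ν)
  set g' : ℝ → ℝ := hgint.1.mk g with hg'def
  have hg'sm : StronglyMeasurable g' := hgint.1.stronglyMeasurable_mk
  have hg'ae : g =ᵐ[μb] g' := hgint.1.ae_eq_mk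
  have hg'int : Integrable g' μb := hgint.congr hg'ae
  -- setwise convergence
  have hconvf : ∀ A : Set ℝ, MeasurableSet A →
      Tendsto (fun ν => ∫ x in A, fn' ν x ∂μa) atTop (nhds (∫ x in A, f x ∂μa)) := by
    intro A hA
    have hφm : Measurable (A.indicator (fun _ => (1:ℝ))) := measurable_const.indicator hA
    have hφb : ∃ C' : ℝ, ∀ x, |A.indicator (fun _ => (1:ℝ)) x| ≤ C' :=
      ⟨1, fun x => by by_cases hx : x ∈ A <;> simp [Set.indicator_apply, hx]⟩
    have e1 : ∀ u : ℝ → ℝ, (fun x => u x * A.indicator (fun _ => (1:ℝ)) x) = A.indicator u := by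
      intro u
      funext x
      by_cases hx : x ∈ A <;> simp [Set.indicator_apply, hx]
    have h1 := hfweak _ hφm hφb
    have e2 : ∀ u : ℝ → ℝ, ∫ x in Set.Ioo (0:ℝ) a, u x * A.indicator (fun _ => (1:ℝ)) x =
        ∫ x in A, u x ∂μa := by
      intro u
      show ∫ x, u x * A.indicator (fun _ => (1:ℝ)) x ∂μa = _
      rw [show (fun x => u x * A.indicator (fun _ => (1:ℝ)) x) = A.indicator u from e1 u,
        integral_indicator hA]
    have e3 : ∀ ν, ∫ x in Set.Ioo (0:ℝ) a, fn ν x * A.indicator (fun _ => (1:ℝ)) x =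
        ∫ x in A, fn' ν x ∂μa := by
      intro ν
      rw [e2 (fn ν)]
      exact integral_congr_ae (ae_restrict_of_ae (hfn'ae ν))
    rw [e2 f] at h1
    exact h1.congr e3
  have hconvg : ∀ A : Set ℝ, MeasurableSet A →
      Tendsto (fun ν => ∫ y in A, gn' ν y ∂μb) atTop (nhds (∫ y in A, g y ∂μb)) := by
    intro A hA
    have hφm : Measurable (A.indicator (fun _ => (1:ℝ))) := measurable_const.indicator hA
    have hφb : ∃ C' : ℝ, ∀ x, |A.indicator (fun _ => (1:ℝ)) x| ≤ C' :=
      ⟨1, fun x => by by_cases hx : x ∈ A <;> simp [Set.indicator_apply, hx]⟩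
    have e1 : ∀ u : ℝ → ℝ, (fun x => u x * A.indicator (fun _ => (1:ℝ)) x) = A.indicator u := by
      intro u
      funext x
      by_cases hx : x ∈ A <;> simp [Set.indicator_apply, hx]
    have h1 := hgweak _ hφm hφb
    have e2 : ∀ u : ℝ → ℝ, ∫ y in Set.Ioo (0:ℝ) b, u y * A.indicator (fun _ => (1:ℝ)) y =
        ∫ y in A, u y ∂μb := by
      intro u
      show ∫ y, u y * A.indicator (fun _ => (1:ℝ)) y ∂μb = _
      rw [show (fun y => u y * A.indicator (fun _ => (1:ℝ)) y) = A.indicator u from e1 u,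
        integral_indicator hA]
    have e3 : ∀ ν, ∫ y in Set.Ioo (0:ℝ) b, gn ν y * A.indicator (fun _ => (1:ℝ)) y =
        ∫ y in A, gn' ν y ∂μb := by
      intro ν
      rw [e2 (gn ν)]
      exact integral_congr_ae (ae_restrict_of_ae (hgn'ae ν))
    rw [e2 g] at h1
    exact h1.congr e3
  -- uniform integrability
  have huif0 := st16_ui hfn'sm hfn'int hfint hconvf
  have huig0 := st16_ui hgn'sm hgn'int hgint hconvg
  have huif : ∀ ε : ℝ, 0 < ε → ∃ δ : ℝ, 0 < δ ∧ ∀ ν, ∀ E : Set ℝ, MeasurableSet E →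
      μa E ≤ ENNReal.ofReal δ → ∫ x in E, |fn ν x| ∂μa ≤ ε := by
    intro ε hε
    obtain ⟨δ, hδ, hs⟩ := huif0 ε hε
    refine ⟨δ, hδ, fun ν E hE hμE => ?_⟩
    have e : ∫ x in E, |fn ν x| ∂μa = ∫ x in E, |fn' ν x| ∂μa :=
      integral_congr_ae (ae_restrict_of_ae ((hfn'ae ν).fun_comp abs))
    rw [e]
    exact hs ν E hE hμE
  have huig : ∀ ε : ℝ, 0 < ε → ∃ δ : ℝ, 0 < δ ∧ ∀ ν, ∀ E : Set ℝ, MeasurableSet E →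
      μb E ≤ ENNReal.ofReal δ → ∫ y in E, |gn ν y| ∂μb ≤ ε := by
    intro ε hε
    obtain ⟨δ, hδ, hs⟩ := huig0 ε hε
    refine ⟨δ, hδ, fun ν E hE hμE => ?_⟩
    have e : ∫ y in E, |gn ν y| ∂μb = ∫ y in E, |gn' ν y| ∂μb :=
      integral_congr_ae (ae_restrict_of_ae ((hgn'ae ν).fun_comp abs))
    rw [e]
    exact hs ν E hE hμE
  -- uniform L¹ bounds
  obtain ⟨δf, hδf, hδfs⟩ := huif0 1 one_pos
  set Mf : ℝ := (⌈a / δf⌉₊ : ℝ) * 1 with hMfdef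
  have hMf : ∀ ν, ∫ x, |fn' ν x| ∂μa ≤ Mf := fun ν =>
    st16_bound hδf (hfn'int ν) (fun E hE hμE => hδfs ν E hE hμE)
  have hMf0 : 0 ≤ Mf := le_trans (integral_nonneg fun x => abs_nonneg _) (hMf 0)
  obtain ⟨δg, hδg, hδgs⟩ := huig0 1 one_pos
  set Mg : ℝ := (⌈b / δg⌉₊ : ℝ) * 1 with hMgdef
  have hMg : ∀ ν, ∫ y, |gn' ν y| ∂μb ≤ Mg := fun ν =>
    st16_bound hδg (hgn'int ν) (fun E hE hμE => hδgs ν E hE hμE)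
  set Mg0 : ℝ := ∫ y, |g' y| ∂μb with hMg0def
  have hMg00 : 0 ≤ Mg0 := integral_nonneg fun y => abs_nonneg _
  -- the Ψ functions
  set Ψn : ℕ → ℝ → ℝ := fun ν x => ∫ y, W x y * gn' ν y ∂μb with hΨndef
  set Ψ : ℝ → ℝ := fun x => ∫ y, W x y * g' y ∂μb with hΨdef
  have hΨnsm : ∀ ν, StronglyMeasurable (Ψn ν) := by
    intro ν
    apply StronglyMeasurable.integral_prod_right' (f := fun p : ℝ × ℝ => W p.1 p.2 * gn' ν p.2)
    exact (hWmeas.mul ((hgn'sm ν).measurable.comp measurable_snd)).stronglyMeasurable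
  have hΨsm : StronglyMeasurable Ψ := by
    apply StronglyMeasurable.integral_prod_right' (f := fun p : ℝ × ℝ => W p.1 p.2 * g' p.2)
    exact (hWmeas.mul (hg'sm.measurable.comp measurable_snd)).stronglyMeasurable
  -- uniform bounds on Ψ's
  have hgenb : ∀ (u : ℝ → ℝ), Integrable u μb → ∀ x,
      |∫ y, W x y * u y ∂μb| ≤ C * ∫ y, |u y| ∂μb := by
    intro u hu x
    calc |∫ y, W x y * u y ∂μb| ≤ ∫ y, |W x y| * |u y| ∂μb := by
          simpa [Real.norm_eq_abs, abs_mul] using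
            norm_integral_le_integral_norm (μ := μb) (fun y => W x y * u y)
      _ ≤ ∫ y, C * |u y| ∂μb := by
          refine integral_mono_of_nonneg
            (Eventually.of_forall fun y => mul_nonneg (abs_nonneg _) (abs_nonneg _))
            (hu.abs.const_mul C) (Eventually.of_forall fun y => ?_)
          exact mul_le_mul_of_nonneg_right (hWbdd x y) (abs_nonneg _)
      _ = C * ∫ y, |u y| ∂μb := integral_const_mul C _
  have hΨnb : ∀ ν x, |Ψn ν x| ≤ C * Mg := fun ν x =>
    (hgenb (gn' ν) (hgn'int ν) x).trans (mul_le_mul_of_nonneg_left (hMg ν) hC)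
  have hΨb : ∀ x, |Ψ x| ≤ C * Mg0 := fun x => hgenb g' hg'int x
  -- pointwise convergence of Ψn to Ψ
  have hΨconv : ∀ x, Tendsto (fun ν => Ψn ν x) atTop (nhds (Ψ x)) := by
    intro x
    have hφm : Measurable (fun y => W x y) := hWmeas.of_uncurry_left
    have h1 := hgweak _ hφm ⟨C, hWbdd x⟩
    have e2 : ∀ ν, ∫ y in Set.Ioo (0:ℝ) b, gn ν y * W x y = Ψn ν x := by
      intro ν
      show ∫ y, gn ν y * W x y ∂μb = ∫ y, W x y * gn' ν y ∂μb
      exact integral_congr_ae ((hgn'ae ν).mono fun y hy => by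
        show gn ν y * W x y = W x y * gn' ν y
        rw [hy, mul_comm])
    have e3 : ∫ y in Set.Ioo (0:ℝ) b, g y * W x y = Ψ x := by
      show ∫ y, g y * W x y ∂μb = ∫ y, W x y * g' y ∂μb
      exact integral_congr_ae (hg'ae.mono fun y hy => by
        show g y * W x y = W x y * g' y
        rw [hy, mul_comm])
    rw [e3] at h1
    exact h1.congr e2
  -- integrability of products
  have hK2 : ∀ ν x, |Ψn ν x - Ψ x| ≤ C * Mg + C * Mg0 := by
    intro ν x
    calc |Ψn ν x - Ψ x| ≤ |Ψn ν x| + |Ψ x| := abs_sub _ _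
      _ ≤ C * Mg + C * Mg0 := add_le_add (hΨnb ν x) (hΨb x)
  set K2 : ℝ := C * Mg + C * Mg0 + 1 with hK2def
  have hK2pos : 0 < K2 := by
    have h1 : 0 ≤ C * Mg := le_trans (abs_nonneg _) (hΨnb 0 0)
    have h2 : 0 ≤ C * Mg0 := le_trans (abs_nonneg _) (hΨb 0)
    positivity
  have hprod1 : ∀ ν, Integrable (fun x => fn ν x * Ψ x) μa := by
    intro ν
    have h1 : Integrable (fun x => Ψ x * fn ν x) μa :=
      Integrable.bdd_mul (hfnint ν) hΨsm.aestronglyMeasurable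
        (c := C * Mg0) (Eventually.of_forall fun x => by rw [Real.norm_eq_abs]; exact hΨb x)
    exact h1.congr (Eventually.of_forall fun x => mul_comm _ _)
  have hprod2 : ∀ ν, Integrable (fun x => fn ν x * (Ψn ν x - Ψ x)) μa := by
    intro ν
    have h1 : Integrable (fun x => (Ψn ν x - Ψ x) * fn ν x) μa :=
      Integrable.bdd_mul (hfnint ν) ((hΨnsm ν).sub hΨsm).aestronglyMeasurable
        (c := C * Mg + C * Mg0) (Eventually.of_forall fun x => by rw [Real.norm_eq_abs]; exact hK2 ν x)
    exact h1.congr (Eventually.of_forall fun x => mul_comm _ _)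
  have hfΨ : Integrable (fun x => f x * Ψ x) μa := by
    have h1 : Integrable (fun x => Ψ x * f x) μa :=
      Integrable.bdd_mul hfint hΨsm.aestronglyMeasurable
        (c := C * Mg0) (Eventually.of_forall fun x => by rw [Real.norm_eq_abs]; exact hΨb x)
    exact h1.congr (Eventually.of_forall fun x => mul_comm _ _)
  -- rewriting the double integrals
  have hinner : ∀ ν, ∀ x ∈ Ioo (0:ℝ) a,
      (∫ y in Set.Ioo (0:ℝ) b, Ω x y * fn ν x * gn ν y) = fn ν x * Ψn ν x := by
    intro ν x hx
    have e1 : ∫ y in Set.Ioo (0:ℝ) b, Ω x y * fn ν x * gn ν y =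
        ∫ y in Set.Ioo (0:ℝ) b, fn ν x * (W x y * gn ν y) :=
      setIntegral_congr_fun measurableSet_Ioo (fun y hy => by rw [← hWeq x hx y hy]; ring)
    rw [e1]
    show ∫ y, fn ν x * (W x y * gn ν y) ∂μb = fn ν x * Ψn ν x
    rw [integral_const_mul]
    congr 1
    exact integral_congr_ae ((hgn'ae ν).mono fun y hy => by
      show W x y * gn ν y = W x y * gn' ν y
      rw [hy])
  have hinner' : ∀ x ∈ Ioo (0:ℝ) a,
      (∫ y in Set.Ioo (0:ℝ) b, Ω x y * f x * g y) = f x * Ψ x := by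
    intro x hx
    have e1 : ∫ y in Set.Ioo (0:ℝ) b, Ω x y * f x * g y =
        ∫ y in Set.Ioo (0:ℝ) b, f x * (W x y * g y) :=
      setIntegral_congr_fun measurableSet_Ioo (fun y hy => by rw [← hWeq x hx y hy]; ring)
    rw [e1]
    show ∫ y, f x * (W x y * g y) ∂μb = f x * Ψ x
    rw [integral_const_mul]
    congr 1
    exact integral_congr_ae (hg'ae.mono fun y hy => by
      show W x y * g y = W x y * g' y
      rw [hy])
  have houter : ∀ ν, ∫ x in Set.Ioo (0:ℝ) a, ∫ y in Set.Ioo (0:ℝ) b, Ω x y * fn ν x * gn ν y =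
      (∫ x, fn ν x * Ψ x ∂μa) + ∫ x, fn ν x * (Ψn ν x - Ψ x) ∂μa := by
    intro ν
    have h1 : ∫ x in Set.Ioo (0:ℝ) a, ∫ y in Set.Ioo (0:ℝ) b, Ω x y * fn ν x * gn ν y =
        ∫ x, fn ν x * Ψn ν x ∂μa :=
      setIntegral_congr_fun measurableSet_Ioo (hinner ν)
    rw [h1]
    have h2 : (fun x => fn ν x * Ψn ν x) =
        fun x => fn ν x * Ψ x + fn ν x * (Ψn ν x - Ψ x) := by
      funext x
      ring
    rw [h2]
    exact integral_add (hprod1 ν) (hprod2 ν)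
  have houter' : ∫ x in Set.Ioo (0:ℝ) a, ∫ y in Set.Ioo (0:ℝ) b, Ω x y * f x * g y =
      ∫ x, f x * Ψ x ∂μa :=
    setIntegral_congr_fun measurableSet_Ioo hinner'
  -- the first term converges by weak convergence of fn
  have hfirst : Tendsto (fun ν => ∫ x, fn ν x * Ψ x ∂μa) atTop
      (nhds (∫ x, f x * Ψ x ∂μa)) :=
    hfweak Ψ hΨsm.measurable ⟨C * Mg0, hΨb⟩
  -- the second term tends to zero
  have hzero : Tendsto (fun ν => ∫ x, fn ν x * (Ψn ν x - Ψ x) ∂μa) atTop (nhds 0) := by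
    rw [Metric.tendsto_atTop]
    intro ε hε
    obtain ⟨δ₂, hδ₂, hδ₂s⟩ := huif (ε / (4 * K2)) (by positivity)
    obtain ⟨T, hTmeas, hTμ, hTunif⟩ := tendstoUniformlyOn_of_ae_tendsto' (μ := μa)
      hΨnsm hΨsm (Eventually.of_forall hΨconv) hδ₂
    have hufr := Metric.tendstoUniformlyOn_iff.1 hTunif (ε / (4 * (Mf + 1)))
      (by positivity)
    obtain ⟨N, hN⟩ := eventually_atTop.1 hufr
    refine ⟨N, fun ν hν => ?_⟩
    rw [Real.dist_eq, sub_zero]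
    -- pointwise domination
    have habs : Integrable (fun x => |fn ν x| * |Ψn ν x - Ψ x|) μa := by
      have h1 := (hprod2 ν).abs
      refine h1.congr (Eventually.of_forall fun x => ?_)
      show |fn ν x * (Ψn ν x - Ψ x)| = |fn ν x| * |Ψn ν x - Ψ x|
      rw [abs_mul]
    have hb1 : |∫ x, fn ν x * (Ψn ν x - Ψ x) ∂μa| ≤
        ∫ x, |fn ν x| * |Ψn ν x - Ψ x| ∂μa := by
      simpa [Real.norm_eq_abs, abs_mul] using
        norm_integral_le_integral_norm (μ := μa) (fun x => fn ν x * (Ψn ν x - Ψ x))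
    have hsplit : ∫ x, |fn ν x| * |Ψn ν x - Ψ x| ∂μa =
        (∫ x in T, |fn ν x| * |Ψn ν x - Ψ x| ∂μa) +
        ∫ x in Tᶜ, |fn ν x| * |Ψn ν x - Ψ x| ∂μa :=
      (integral_add_compl hTmeas habs).symm
    have hT1 : ∫ x in T, |fn ν x| * |Ψn ν x - Ψ x| ∂μa ≤ ε / 4 := by
      have h1 : ∫ x in T, |fn ν x| * |Ψn ν x - Ψ x| ∂μa ≤ ∫ x in T, |fn ν x| * K2 ∂μa := by
        refine setIntegral_mono_on habs.integrableOn ((hfnint ν).abs.mul_const K2).integrableOn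
          hTmeas fun x _ => ?_
        refine mul_le_mul_of_nonneg_left ?_ (abs_nonneg _)
        calc |Ψn ν x - Ψ x| ≤ C * Mg + C * Mg0 := hK2 ν x
          _ ≤ K2 := by rw [hK2def]; linarith
      have h2 : ∫ x in T, |fn ν x| * K2 ∂μa = (∫ x in T, |fn ν x| ∂μa) * K2 :=
        integral_mul_const K2 _
      have h3 : ∫ x in T, |fn ν x| ∂μa ≤ ε / (4 * K2) := hδ₂s ν T hTmeas hTμ
      have h4 : (∫ x in T, |fn ν x| ∂μa) * K2 ≤ (ε / (4 * K2)) * K2 :=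
        mul_le_mul_of_nonneg_right h3 hK2pos.le
      have h5 : (ε / (4 * K2)) * K2 = ε / 4 := by
        have hne : K2 ≠ 0 := hK2pos.ne'
        field_simp
      rw [h2] at h1
      exact (h1.trans h4).trans (le_of_eq h5)
    have hT2 : ∫ x in Tᶜ, |fn ν x| * |Ψn ν x - Ψ x| ∂μa ≤ ε / 4 := by
      have h1 : ∫ x in Tᶜ, |fn ν x| * |Ψn ν x - Ψ x| ∂μa ≤
          ∫ x in Tᶜ, |fn ν x| * (ε / (4 * (Mf + 1))) ∂μa := by
        refine setIntegral_mono_on habs.integrableOn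
          ((hfnint ν).abs.mul_const _).integrableOn hTmeas.compl fun x hx => ?_
        refine mul_le_mul_of_nonneg_left ?_ (abs_nonneg _)
        have h2 := hN ν hν x hx
        rw [Real.dist_eq] at h2
        rw [abs_sub_comm]
        exact h2.le
      have h2 : ∫ x in Tᶜ, |fn ν x| * (ε / (4 * (Mf + 1))) ∂μa =
          (∫ x in Tᶜ, |fn ν x| ∂μa) * (ε / (4 * (Mf + 1))) := integral_mul_const _ _
      have h3 : ∫ x in Tᶜ, |fn ν x| ∂μa ≤ Mf := by
        have h4 : ∫ x in Tᶜ, |fn ν x| ∂μa ≤ ∫ x, |fn ν x| ∂μa :=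
          setIntegral_le_integral (hfnint ν).abs (Eventually.of_forall fun x => abs_nonneg _)
        have h5 : ∫ x, |fn ν x| ∂μa = ∫ x, |fn' ν x| ∂μa :=
          integral_congr_ae ((hfn'ae ν).fun_comp abs)
        rw [h5] at h4
        exact h4.trans (hMf ν)
      have h6 : (∫ x in Tᶜ, |fn ν x| ∂μa) * (ε / (4 * (Mf + 1))) ≤
          Mf * (ε / (4 * (Mf + 1))) := mul_le_mul_of_nonneg_right h3 (by positivity)
      have h7 : Mf * (ε / (4 * (Mf + 1))) ≤ ε / 4 := by
        have hM1 : (0:ℝ) < Mf + 1 := by linarith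
        have h8 : Mf * (ε / (4 * (Mf + 1))) ≤ (Mf + 1) * (ε / (4 * (Mf + 1))) :=
          mul_le_mul_of_nonneg_right (by linarith) (by positivity)
        have h9 : (Mf + 1) * (ε / (4 * (Mf + 1))) = ε / 4 := by
          field_simp
        linarith
      linarith
    calc |∫ x, fn ν x * (Ψn ν x - Ψ x) ∂μa| ≤ ∫ x, |fn ν x| * |Ψn ν x - Ψ x| ∂μa := hb1
      _ ≤ ε / 4 + ε / 4 := by rw [hsplit]; exact add_le_add hT1 hT2
      _ < ε := by linarith
  -- put everything together
  have hfinal := hfirst.add hzero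
  rw [add_zero] at hfinal
  rw [show (fun ν => ∫ x in Set.Ioo (0:ℝ) a, ∫ y in Set.Ioo (0:ℝ) b, Ω x y * fn ν x * gn ν y) =
    (fun ν => (∫ x, fn ν x * Ψ x ∂μa) + ∫ x, fn ν x * (Ψn ν x - Ψ x) ∂μa) from funext houter,
    houter']
  exact hfinal
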